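/- In the three-spin system, for all real θ: exp(-iπ I_{1z}I_{2x}) · exp(-i(θ/2) I_{2y}I_{3z}) · exp(iπ I_{1z}I_{2x}) = exp(-iθ I_{1z}I_{2z}I_{3z}). -/

import Mathlib

open Matrix NormedSpace Real
open scoped Matrix Kronecker

noncomputable section

def Ix : Matrix (Fin 2) (Fin 2) ℂ := (1/2 : ℂ) • !![0, 1; 1, 0]
def Iy : Matrix (Fin 2) (Fin 2) ℂ := (1/2 : ℂ) • !![0, -Complex.I; Complex.I, 0]
def Iz : Matrix (Fin 2) (Fin 2) ℂ := (1/2 : ℂ) • !![1, 0; 0, -1]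

abbrev Spin3 := Matrix (Fin 2 × Fin 2 × Fin 2) (Fin 2 × Fin 2 × Fin 2) ℂ

/-- The operator acting as `P`, `Q`, `R` on the three tensor factors of `(ℂ²)⊗³`. -/
def triple (P Q R : Matrix (Fin 2) (Fin 2) ℂ) : Spin3 := P ⊗ₖ (Q ⊗ₖ R)

def I1x : Spin3 := triple Ix 1 1
def I1y : Spin3 := triple Iy 1 1
def I1z : Spin3 := triple Iz 1 1
def I2x : Spin3 := triple 1 Ix 1
def I2y : Spin3 := triple 1 Iy 1
def I2z : Spin3 := triple 1 Iz 1
def I3x : Spin3 := triple 1 1 Ix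
def I3y : Spin3 := triple 1 1 Iy
def I3z : Spin3 := triple 1 1 Iz

set_option maxHeartbeats 1000000

section AbstractExp
open scoped Nat
variable {𝔸 : Type*} [NormedRing 𝔸] [NormedAlgebra ℂ 𝔸] [CompleteSpace 𝔸]

lemma exp_idem (P : 𝔸) (hP : P * P = P) (s : ℂ) :
    NormedSpace.exp (s • P) = 1 + (Complex.exp s - 1) • P := by
  have hpow : ∀ n : ℕ, P ^ (n + 1) = P := by
    intro n; induction n with
    | zero => simp
    | succ k ih => rw [pow_succ, ih, hP]
  have hg : Summable fun n : ℕ => ((n !)⁻¹ : ℂ) * s ^ n := by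
    simpa [smul_eq_mul] using expSeries_summable' (𝕂 := ℂ) s
  have hg1 : Summable fun n : ℕ => (((n + 1)!)⁻¹ : ℂ) * s ^ (n + 1) :=
    (summable_nat_add_iff (f := fun n : ℕ => ((n !)⁻¹ : ℂ) * s ^ n) 1).2 hg
  have hexp : Complex.exp s = 1 + ∑' n : ℕ, (((n + 1)!)⁻¹ : ℂ) * s ^ (n + 1) := by
    have h0 : (∑' n : ℕ, ((n !)⁻¹ : ℂ) * s ^ n)
        = 1 + ∑' n : ℕ, (((n + 1)!)⁻¹ : ℂ) * s ^ (n + 1) := by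
      rw [Summable.tsum_eq_zero_add hg]; simp
    rw [← h0, Complex.exp_eq_exp_ℂ, exp_eq_tsum (𝕂 := ℂ)]
    simp [smul_eq_mul]
  have hsum : Summable fun n : ℕ => ((n !)⁻¹ : ℂ) • (s • P) ^ n := expSeries_summable' (𝕂 := ℂ) _
  have h1 : ∀ n : ℕ, (((n + 1)!)⁻¹ : ℂ) • (s • P) ^ (n + 1)
      = ((((n + 1)!)⁻¹ : ℂ) * s ^ (n + 1)) • P := by
    intro n; rw [smul_pow, hpow, smul_smul]
  calc NormedSpace.exp (s • P) = ∑' n : ℕ, ((n !)⁻¹ : ℂ) • (s • P) ^ n := by rw [exp_eq_tsum (𝕂 := ℂ)]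
    _ = 1 + ∑' n : ℕ, (((n + 1)!)⁻¹ : ℂ) • (s • P) ^ (n + 1) := by
        rw [Summable.tsum_eq_zero_add hsum]; simp
    _ = 1 + (∑' n : ℕ, (((n + 1)!)⁻¹ : ℂ) * s ^ (n + 1)) • P := by
        rw [tsum_congr h1, Summable.tsum_smul_const hg1]
    _ = 1 + (Complex.exp s - 1) • P := by rw [hexp, add_sub_cancel_left]

lemma exp_sq (N : 𝔸) (c t : ℂ) (hc : c ≠ 0) (hN : N * N = (c * c) • 1) :
    NormedSpace.exp (t • N) = Complex.cosh (t * c) • 1 + (Complex.sinh (t * c) * c⁻¹) • N := by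
  set P : 𝔸 := (1/2 : ℂ) • 1 + (1/(2*c)) • N with hPdef
  set Q : 𝔸 := (1/2 : ℂ) • 1 - (1/(2*c)) • N with hQdef
  have expand : ∀ a b a' b' : ℂ, (a • (1:𝔸) + b • N) * (a' • 1 + b' • N)
      = (a*a' + b*b'*(c*c)) • 1 + (a*b' + b*a') • N := by
    intro a b a' b'
    simp only [mul_add, add_mul, smul_mul_assoc, mul_smul_comm, one_mul, mul_one, hN, smul_smul]
    module
  have hPP : P * P = P := by
    rw [hPdef, expand]; match_scalars <;> field_simp <;> ring
  have hQQ : Q * Q = Q := by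
    rw [hQdef, sub_eq_add_neg, ← neg_smul, expand]
    match_scalars <;> field_simp <;> ring
  have hPQ : P * Q = 0 := by
    rw [hPdef, hQdef, sub_eq_add_neg, ← neg_smul, expand]
    match_scalars <;> field_simp <;> ring
  have hQP : Q * P = 0 := by
    rw [hPdef, hQdef, sub_eq_add_neg, ← neg_smul, expand]
    match_scalars <;> field_simp <;> ring
  have hdecomp : t • N = (t*c) • P + (-(t*c)) • Q := by
    rw [hPdef, hQdef]; match_scalars <;> field_simp <;> ring
  have hcomm : Commute ((t*c) • P) ((-(t*c)) • Q) := by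
    have h : Commute P Q := by rw [Commute, SemiconjBy, hPQ, hQP]
    exact (h.smul_left _).smul_right _
  letI : NormedAlgebra ℚ 𝔸 := NormedAlgebra.restrictScalars ℚ ℂ 𝔸
  rw [hdecomp, exp_add_of_commute hcomm, exp_idem P hPP, exp_idem Q hQQ]
  have c1 : (1:𝔸) + (Complex.exp (t*c) - 1) • P
      = ((Complex.exp (t*c) + 1)/2) • 1 + ((Complex.exp (t*c) - 1)/(2*c)) • N := by
    rw [hPdef]; match_scalars <;> field_simp <;> ring
  have c2 : (1:𝔸) + (Complex.exp (-(t*c)) - 1) • Q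
      = ((Complex.exp (-(t*c)) + 1)/2) • 1 + (-((Complex.exp (-(t*c)) - 1))/(2*c)) • N := by
    rw [hQdef]; match_scalars <;> field_simp <;> ring
  rw [c1, c2, expand]
  have e1 : Complex.cosh (t*c) = (Complex.exp (t*c) + Complex.exp (-(t*c)))/2 := rfl
  have e2 : Complex.sinh (t*c) = (Complex.exp (t*c) - Complex.exp (-(t*c)))/2 := rfl
  rw [e1, e2]
  match_scalars <;> field_simp <;> ring

end AbstractExp

section PauliFacts

lemma pauli_zz : Iz * Iz = (1/4 : ℂ) • 1 := by
  ext i j; fin_cases i <;> fin_cases j <;>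
    simp [Iz, Matrix.mul_apply, Fin.sum_univ_two, Matrix.one_apply] <;>
    ring_nf <;> norm_num [Complex.I_sq]
lemma pauli_xx : Ix * Ix = (1/4 : ℂ) • 1 := by
  ext i j; fin_cases i <;> fin_cases j <;>
    simp [Ix, Matrix.mul_apply, Fin.sum_univ_two, Matrix.one_apply] <;>
    ring_nf <;> norm_num [Complex.I_sq]
lemma pauli_yy : Iy * Iy = (1/4 : ℂ) • 1 := by
  ext i j; fin_cases i <;> fin_cases j <;>
    simp [Iy, Matrix.mul_apply, Fin.sum_univ_two, Matrix.one_apply] <;>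
    ring_nf <;> norm_num [Complex.I_sq]
lemma pauli_xy : Ix * Iy = (Complex.I/2) • Iz := by
  ext i j; fin_cases i <;> fin_cases j <;>
    simp [Ix, Iy, Iz, Matrix.mul_apply, Fin.sum_univ_two] <;>
    ring_nf <;> norm_num [Complex.I_sq]
lemma pauli_yx : Iy * Ix = (-(Complex.I/2)) • Iz := by
  ext i j; fin_cases i <;> fin_cases j <;>
    simp [Ix, Iy, Iz, Matrix.mul_apply, Fin.sum_univ_two] <;>
    ring_nf <;> norm_num [Complex.I_sq]
lemma pauli_zx : Iz * Ix = (Complex.I/2) • Iy := by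
  ext i j; fin_cases i <;> fin_cases j <;>
    simp [Ix, Iy, Iz, Matrix.mul_apply, Fin.sum_univ_two] <;>
    ring_nf <;> norm_num [Complex.I_sq]

lemma triple_mul (P Q R P' Q' R' : Matrix (Fin 2) (Fin 2) ℂ) :
    triple P Q R * triple P' Q' R' = triple (P * P') (Q * Q') (R * R') := by
  simp only [triple, ← Matrix.mul_kronecker_mul]

lemma triple_one : triple 1 1 1 = (1 : Spin3) := by
  simp [triple, Matrix.one_kronecker_one]

lemma triple_smul_left (a : ℂ) (P Q R : Matrix (Fin 2) (Fin 2) ℂ) :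
    triple (a • P) Q R = a • triple P Q R := by
  simp [triple, Matrix.smul_kronecker]
lemma triple_smul_mid (a : ℂ) (P Q R : Matrix (Fin 2) (Fin 2) ℂ) :
    triple P (a • Q) R = a • triple P Q R := by
  simp [triple, Matrix.smul_kronecker, Matrix.kronecker_smul]
lemma triple_smul_right (a : ℂ) (P Q R : Matrix (Fin 2) (Fin 2) ℂ) :
    triple P Q (a • R) = a • triple P Q R := by
  simp [triple, Matrix.kronecker_smul]

lemma hX : I1z * I2x = triple Iz Ix 1 := by
  rw [I1z, I2x, triple_mul, one_mul, mul_one, mul_one]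
lemma hM : I2y * I3z = triple 1 Iy Iz := by
  rw [I2y, I3z, triple_mul, one_mul, one_mul, mul_one]
lemma hZ : I1z * I2z * I3z = triple Iz Iz Iz := by
  rw [I1z, I2z, I3z, triple_mul, triple_mul]
  simp only [one_mul, mul_one]

lemma factXX : (I1z * I2x) * (I1z * I2x) = ((1/4 : ℂ) * (1/4)) • (1 : Spin3) := by
  rw [hX, triple_mul, pauli_zz, pauli_xx, one_mul, triple_smul_left, triple_smul_mid,
    smul_smul, triple_one]
lemma factMM : (I2y * I3z) * (I2y * I3z) = ((1/4 : ℂ) * (1/4)) • (1 : Spin3) := by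
  rw [hM, triple_mul, pauli_yy, pauli_zz, one_mul, triple_smul_mid, triple_smul_right,
    smul_smul, triple_one]
lemma factZZ : (I1z * I2z * I3z) * (I1z * I2z * I3z) = ((1/8 : ℂ) * (1/8)) • (1 : Spin3) := by
  rw [hZ, triple_mul, pauli_zz, triple_smul_left, triple_smul_mid, triple_smul_right,
    smul_smul, smul_smul, triple_one]
  norm_num
lemma factXM : (I1z * I2x) * (I2y * I3z) = (Complex.I/2) • (I1z * I2z * I3z) := by
  rw [hX, hM, hZ, triple_mul, pauli_xy, one_mul, mul_one, triple_smul_mid]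
lemma factMX : (I2y * I3z) * (I1z * I2x) = (-(Complex.I/2)) • (I1z * I2z * I3z) := by
  rw [hX, hM, hZ, triple_mul, pauli_yx, one_mul, mul_one, triple_smul_mid]
lemma factZX : (I1z * I2z * I3z) * (I1z * I2x) = ((1/4 : ℂ) * (Complex.I/2)) • (I2y * I3z) := by
  rw [hX, hM, hZ, triple_mul, pauli_zz, pauli_zx, mul_one, triple_smul_left, triple_smul_mid,
    smul_smul]

end PauliFacts

/-- The key noncommutative-algebra computation. -/
lemma main_alg {A : Type*} [Ring A] [Algebra ℂ A] (X M Z : A) (C Sa cb sb : ℂ)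
    (hXX : X * X = ((1/4 : ℂ) * (1/4)) • 1)
    (hXM : X * M = (Complex.I/2) • Z)
    (hMX : M * X = (-(Complex.I/2)) • Z)
    (hZX : Z * X = ((1/4 : ℂ) * (Complex.I/2)) • M)
    (h1 : C ^ 2 - Sa ^ 2 = 1) (h2 : C ^ 2 + Sa ^ 2 = 0)
    (h3 : C * Sa * Complex.I = 1/2) :
    (C • 1 + (Sa * 4) • X) * (cb • 1 + (sb * 4) • M) * (C • 1 + (-Sa * 4) • X)
      = cb • 1 + (sb * 8) • Z := by
  simp only [mul_add, add_mul, smul_mul_assoc, mul_smul_comm, one_mul, mul_one,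
    hXX, hXM, hMX, hZX, smul_smul]
  match_scalars
  · linear_combination cb * h1
  · ring
  · linear_combination (4:ℂ) * sb * h2 - (4:ℂ) * Sa^2 * sb * Complex.I_sq
  · linear_combination (16 : ℂ) * sb * h3

theorem trilinear_conjugation (θ : ℝ) :
    NormedSpace.exp ((-((Real.pi : ℂ) * Complex.I)) • (I1z * I2x)) *
      NormedSpace.exp ((-(((θ : ℂ) / 2) * Complex.I)) • (I2y * I3z)) *
      NormedSpace.exp (((Real.pi : ℂ) * Complex.I) • (I1z * I2x)) =
    NormedSpace.exp ((-((θ : ℂ) * Complex.I)) • (I1z * I2z * I3z)) := by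
  letI : SeminormedRing Spin3 := Matrix.linftyOpSemiNormedRing
  letI : NormedRing Spin3 := Matrix.linftyOpNormedRing
  letI : NormedAlgebra ℂ Spin3 := Matrix.linftyOpNormedAlgebra
  erw [exp_sq _ (1/4) _ (by norm_num) factXX, exp_sq _ (1/4) _ (by norm_num) factMM,
    exp_sq _ (1/4) _ (by norm_num) factXX, exp_sq _ (1/8) _ (by norm_num) factZZ]
  set A : ℂ := (-((Real.pi : ℂ) * Complex.I)) * (1/4) with hA
  have hA3 : ((Real.pi : ℂ) * Complex.I) * (1/4) = -A := by rw [hA]; ring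
  have hB : (-((θ : ℂ) * Complex.I)) * (1/8) = (-(((θ : ℂ)/2) * Complex.I)) * (1/4) := by ring
  rw [hA3, hB, Complex.cosh_neg, Complex.sinh_neg]
  have hinv4 : ((1/4 : ℂ))⁻¹ = 4 := by norm_num
  have hinv8 : ((1/8 : ℂ))⁻¹ = 8 := by norm_num
  rw [hinv4, hinv8]
  -- scalar trig facts
  have e2 : A + A = -((((Real.pi/2 : ℝ)) : ℂ) * Complex.I) := by
    rw [hA]; push_cast; ring
  have ecosh : Complex.cosh (A + A) = 0 := by
    rw [e2, Complex.cosh_neg, Complex.cosh_mul_I, ← Complex.ofReal_cos,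
      Real.cos_pi_div_two, Complex.ofReal_zero]
  have esinh : Complex.sinh (A + A) = -Complex.I := by
    rw [e2, Complex.sinh_neg, Complex.sinh_mul_I, ← Complex.ofReal_sin,
      Real.sin_pi_div_two]
    simp
  have h1 : Complex.cosh A ^ 2 - Complex.sinh A ^ 2 = 1 := Complex.cosh_sq_sub_sinh_sq A
  have h2 : Complex.cosh A ^ 2 + Complex.sinh A ^ 2 = 0 := by
    have := Complex.cosh_add A A
    rw [ecosh] at this
    linear_combination -this
  have h3 : Complex.cosh A * Complex.sinh A * Complex.I = 1/2 := by
    have := Complex.sinh_add A A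
    rw [esinh] at this
    linear_combination (-Complex.I/2) * this - (1/2 : ℂ) * Complex.I_sq
  exact main_alg (I1z * I2x) (I2y * I3z) (I1z * I2z * I3z)
    (Complex.cosh A) (Complex.sinh A)
    (Complex.cosh ((-(((θ : ℂ)/2) * Complex.I)) * (1/4)))
    (Complex.sinh ((-(((θ : ℂ)/2) * Complex.I)) * (1/4)))
    factXX factXM factMX factZX h1 h2 h3
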